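/- Let P = (−Δ)⁻¹curl curl denote the Leray projection onto divergence-free vector fields on ℝ³, R_j = |D|⁻¹∂_j the Riesz transforms, and Q_{ij}(u,v) = ∂_iu∂_jv − ∂_ju∂_iv. Then for smooth complex-valued φ (with suitable decay), writing φ = Re φ + i Im φ, one has the identity P(Im(φ̄∇φ))_i = 2R^j|D|⁻¹Q_{ij}(Re φ, Im φ) for i = 1,2,3. -/

import Mathlib

noncomputable section

/-- Partial derivative `∂ᵢ f` on `ℝ³`. -/
def pd (f : EuclideanSpace ℝ (Fin 3) → ℝ) (i : Fin 3) (x : EuclideanSpace ℝ (Fin 3)) : ℝ :=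
  fderiv ℝ f x (EuclideanSpace.single i 1)

/-- The Laplacian on `ℝ³`. -/
def lap (f : EuclideanSpace ℝ (Fin 3) → ℝ) (x : EuclideanSpace ℝ (Fin 3)) : ℝ :=
  ∑ i : Fin 3, pd (pd f i) i x

/-- The null forms `Q_{ij}(u,v) = ∂ᵢu ∂ⱼv − ∂ⱼu ∂ᵢv`. -/
def Qform (i j : Fin 3) (u v : EuclideanSpace ℝ (Fin 3) → ℝ)
    (x : EuclideanSpace ℝ (Fin 3)) : ℝ :=
  pd u i x * pd v j x - pd u j x * pd v i x

namespace Stmt12Aux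

open SchwartzMap MeasureTheory Real
open scoped FourierTransform RealInnerProductSpace
set_option synthInstance.maxHeartbeats 1000000
set_option maxHeartbeats 1000000
set_option linter.unnecessarySimpa false

local notation "E3" => EuclideanSpace ℝ (Fin 3)

def e (i : Fin 3) : E3 := EuclideanSpace.single i 1

lemma htg (f : 𝓢(E3, ℝ)) : Function.HasTemperateGrowth (⇑f) := by
  refine ⟨f.smooth ⊤, fun n => ⟨0, SchwartzMap.seminorm ℝ 0 n f, fun x => ?_⟩⟩
  simpa using f.norm_iteratedFDeriv_le_seminorm ℝ n x

def PD (i : Fin 3) (f : 𝓢(E3, ℝ)) : 𝓢(E3, ℝ) := (SchwartzMap.evalCLM ℝ E3 ℝ (e i) ∘L SchwartzMap.fderivCLM ℝ E3 ℝ) f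

lemma PD_coe (i : Fin 3) (f : 𝓢(E3, ℝ)) : ⇑(PD i f) = pd (⇑f) i := rfl

def MUL (f g : 𝓢(E3, ℝ)) : 𝓢(E3, ℝ) :=
  SchwartzMap.bilinLeftCLM (ContinuousLinearMap.mul ℝ ℝ) (htg g) f

lemma MUL_coe (f g : 𝓢(E3, ℝ)) : ⇑(MUL f g) = fun x => f x * g x := rfl

lemma MUL_comm (f g : 𝓢(E3, ℝ)) : MUL f g = MUL g f := by
  ext x; exact mul_comm _ _

lemma sdiff (f : 𝓢(E3, ℝ)) : Differentiable ℝ (⇑f) :=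
  (f.smooth ⊤).differentiable (by simp)

lemma sdiff' (f : 𝓢(E3, ℝ)) : Differentiable ℝ (fderiv ℝ (⇑f)) := by
  have : fderiv ℝ (⇑f) = ⇑(SchwartzMap.fderivCLM ℝ E3 ℝ f) := rfl
  rw [this]
  exact ((SchwartzMap.fderivCLM ℝ E3 ℝ f).smooth ⊤).differentiable (by simp)

lemma PD_sub (i : Fin 3) (f g : 𝓢(E3, ℝ)) : PD i (f - g) = PD i f - PD i g := by
  simp [PD]

lemma PD_add (i : Fin 3) (f g : 𝓢(E3, ℝ)) : PD i (f + g) = PD i f + PD i g := by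
  simp [PD]

lemma PD_smul (i : Fin 3) (c : ℝ) (f : 𝓢(E3, ℝ)) : PD i (c • f) = c • PD i f := by
  simp [PD]

lemma PD_MUL (i : Fin 3) (f g : 𝓢(E3, ℝ)) :
    PD i (MUL f g) = MUL (PD i f) g + MUL f (PD i g) := by
  ext x
  show pd (fun y => f y * g y) i x = pd (⇑f) i x * g x + f x * pd (⇑g) i x
  change fderiv ℝ (⇑f * ⇑g) x (EuclideanSpace.single i 1) = fderiv ℝ f x (EuclideanSpace.single i 1) * g x + f x * fderiv ℝ g x (EuclideanSpace.single i 1)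
  rw [fderiv_mul (sdiff f x) (sdiff g x)]
  simp only [ContinuousLinearMap.add_apply, ContinuousLinearMap.smul_apply, smul_eq_mul]
  ring

lemma pd_pd (f : 𝓢(E3, ℝ)) (i j : Fin 3) (x : E3) :
    pd (pd (⇑f) i) j x = fderiv ℝ (fderiv ℝ (⇑f)) x (e j) (e i) := by
  have hdf : DifferentiableAt ℝ (fderiv ℝ (⇑f)) x := (sdiff' f x)
  have : pd (⇑f) i = fun y => (fderiv ℝ (⇑f) y) (e i) := rfl
  rw [pd, this, fderiv_clm_apply hdf (differentiableAt_const (e i))]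
  simp [e]

lemma PD_comm (i j : Fin 3) (f : 𝓢(E3, ℝ)) : PD j (PD i f) = PD i (PD j f) := by
  ext x
  show pd (pd (⇑f) i) j x = pd (pd (⇑f) j) i x
  rw [pd_pd, pd_pd]
  have hf' : ∀ y, HasFDerivAt (⇑f) (fderiv ℝ (⇑f) y) y := fun y => (sdiff f y).hasFDerivAt
  exact second_derivative_symmetric hf' (sdiff' f x).hasFDerivAt _ _

def LAP (f : 𝓢(E3, ℝ)) : 𝓢(E3, ℝ) := PD 0 (PD 0 f) + PD 1 (PD 1 f) + PD 2 (PD 2 f)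

lemma LAP_apply (f : 𝓢(E3, ℝ)) (x : E3) : LAP f x = lap (⇑f) x := by
  simp [LAP, lap, Fin.sum_univ_three, SchwartzMap.add_apply, PD_coe]


lemma cont_iter {f : E3 → ℂ} (hf : ContDiff ℝ ((⊤:ℕ∞) : WithTop ℕ∞) f) (m : ℕ) :
    Continuous fun x => iteratedFDeriv ℝ m f x :=
  hf.continuous_iteratedFDeriv (n := (⊤:ℕ∞)) (by exact_mod_cast le_top)

lemma liouville (h : 𝓢(E3, ℝ)) (hh : ∀ x, lap (⇑h) x = 0) : ∀ x, h x = 0 := by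
  classical
  set L : ℝ →L[ℝ] ℂ := Complex.ofRealCLM with hL
  set g : E3 → ℂ := fun x => (h x : ℂ) with hgdef
  have hgc : g = ⇑L ∘ ⇑h := rfl
  have hsmooth : ContDiff ℝ ((⊤:ℕ∞) : WithTop ℕ∞) g := L.contDiff.comp (h.smooth ⊤)
  have hint : ∀ n : ℕ, Integrable (iteratedFDeriv ℝ n g) volume := by
    intro n
    have h1 := h.integrable_pow_mul_iteratedFDeriv (μ := volume) 0 n
    have h1' : Integrable (fun x : E3 => ‖L‖ * ‖iteratedFDeriv ℝ n (⇑h) x‖) volume := by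
      simpa using h1.const_mul ‖L‖
    refine h1'.mono' ((cont_iter hsmooth n).aestronglyMeasurable) ?_
    refine Filter.Eventually.of_forall fun x => ?_
    rw [hgc, L.iteratedFDeriv_comp_left ((h.smooth ⊤).contDiffAt (x := x)) (mod_cast le_top)]
    simpa using L.norm_compContinuousMultilinearMap_le (iteratedFDeriv ℝ n (⇑h) x)
  have key : ∀ w : E3, w ≠ 0 → 𝓕 g w = 0 := by
    intro w hw
    have A := Real.fourier_iteratedFDeriv (f := g) (N := (2 : ℕ∞))
      (hsmooth.of_le (mod_cast le_top)) (fun n _ => hint n) (n := 2) le_rfl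
    have hI : ∀ i : Fin 3, Integrable (fun x => iteratedFDeriv ℝ 2 g x ![e i, e i]) volume := by
      intro i
      refine ((hint 2).norm.const_mul (∏ k : Fin 2, ‖(![e i, e i]) k‖)).mono'
        ((continuous_eval_const _).comp (cont_iter hsmooth 2)).aestronglyMeasurable ?_
      refine Filter.Eventually.of_forall fun x => ?_
      simpa [mul_comm] using (iteratedFDeriv ℝ 2 g x).le_opNorm ![e i, e i]
    have B : ∀ i : Fin 3,
        𝓕 (fun x => iteratedFDeriv ℝ 2 g x ![e i, e i]) w
          = (-(2 * π * Complex.I)) ^ 2 • ((w i : ℝ) ^ 2 • 𝓕 g w) := by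
      intro i
      rw [← Real.fourier_continuousMultilinearMap_apply (hint 2), A]
      simp only [VectorFourier.fourierPowSMulRight_apply]
      congr 1
      rw [Fin.prod_univ_two]
      have h1 : ∀ k : Fin 2, (-(innerSL ℝ)) w ((![e i, e i]) k) = -(w i) := by
        intro k
        fin_cases k <;>
          simp [e, EuclideanSpace.inner_single_right, real_inner_comm]
      rw [h1 0, h1 1, show (-(w i)) * (-(w i)) = (w i)^2 by ring]
    have C : ∑ i : Fin 3, 𝓕 (fun x => iteratedFDeriv ℝ 2 g x ![e i, e i]) w = 0 := by
      have hD : ∀ x : E3, ∑ i : Fin 3, iteratedFDeriv ℝ 2 g x ![e i, e i] = 0 := by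
        intro x
        have hco : ∀ i : Fin 3, iteratedFDeriv ℝ 2 g x ![e i, e i]
            = ((iteratedFDeriv ℝ 2 (⇑h) x ![e i, e i] : ℝ) : ℂ) := by
          intro i
          rw [hgc, L.iteratedFDeriv_comp_left ((h.smooth ⊤).contDiffAt (x := x)) (WithTop.coe_le_coe.mpr le_top)]
          rfl
        simp only [hco]
        rw [← Complex.ofReal_sum]
        have : ∑ i : Fin 3, iteratedFDeriv ℝ 2 (⇑h) x ![e i, e i] = lap (⇑h) x := by
          rw [lap]
          refine Finset.sum_congr rfl fun i _ => ?_
          rw [iteratedFDeriv_two_apply, pd_pd]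
          simp [e]
        rw [this, hh x, Complex.ofReal_zero]
      have hsum := MeasureTheory.integral_finset_sum (μ := volume) Finset.univ
        (f := fun (i : Fin 3) (v : E3) => Real.fourierChar (-⟪v, w⟫) • iteratedFDeriv ℝ 2 g v ![e i, e i])
        (fun i _ => (Real.fourierIntegral_convergent_iff w).2 (hI i))
      calc ∑ i : Fin 3, 𝓕 (fun x => iteratedFDeriv ℝ 2 g x ![e i, e i]) w
          = ∑ i : Fin 3, ∫ v : E3,
              Real.fourierChar (-⟪v, w⟫) • iteratedFDeriv ℝ 2 g v ![e i, e i] := by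
            simp only [Real.fourier_eq]
        _ = ∫ v : E3, ∑ i : Fin 3,
              Real.fourierChar (-⟪v, w⟫) • iteratedFDeriv ℝ 2 g v ![e i, e i] := hsum.symm
        _ = 0 := by
            apply MeasureTheory.integral_eq_zero_of_ae
            refine Filter.Eventually.of_forall fun v => ?_
            show ∑ i : Fin 3, Real.fourierChar (-⟪v, w⟫) • iteratedFDeriv ℝ 2 g v ![e i, e i] = 0
            rw [← Finset.smul_sum, hD v, smul_zero]
    rw [Finset.sum_congr rfl fun i _ => B i, ← Finset.smul_sum, ← Finset.sum_smul] at C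
    have hc : ((-(2 * (π:ℂ) * Complex.I)) ^ 2) ≠ 0 := by
      apply pow_ne_zero
      simp [Real.pi_ne_zero, Complex.I_ne_zero]
    rcases smul_eq_zero.mp C with hc' | C2
    · exact absurd hc' hc
    rcases smul_eq_zero.mp C2 with hs | hF
    · exfalso
      obtain ⟨i0, hi0⟩ : ∃ i, w i ≠ 0 := by
        by_contra hcon
        push_neg at hcon
        exact hw (by ext i; exact hcon i)
      have hpos : 0 < ∑ i : Fin 3, (w i) ^ 2 :=
        Finset.sum_pos' (fun i _ => sq_nonneg _) ⟨i0, Finset.mem_univ _, by positivity⟩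
      rw [hs] at hpos
      exact lt_irrefl 0 hpos
    · exact hF
  have hae : ∀ᵐ w : E3 ∂volume, 𝓕 g w = 0 := by
    have h0 : ∀ᵐ w : E3 ∂volume, w ≠ 0 := by
      rw [MeasureTheory.ae_iff]
      simpa using MeasureTheory.measure_singleton (0 : E3)
    filter_upwards [h0] with w hw using key w hw
  intro x
  have hgint : Integrable g volume := by
    refine h.integrable.norm.mono' (hsmooth.continuous.aestronglyMeasurable) ?_
    refine Filter.Eventually.of_forall fun y => ?_
    simp [hgdef]
  have hFint : Integrable (𝓕 g) volume :=
    (MeasureTheory.integrable_zero _ _ _).congr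
      (by filter_upwards [hae] with w hw using hw.symm)
  have hinv : 𝓕⁻ (𝓕 g) x = g x :=
    hgint.fourierInv_fourier_eq hFint (hsmooth.continuous.continuousAt (x := x))
  have hz : 𝓕⁻ (𝓕 g) x = 0 := by
    rw [Real.fourierInv_eq]
    apply MeasureTheory.integral_eq_zero_of_ae
    filter_upwards [hae] with v hv
    show (𝐞 ⟪v, x⟫ : Circle) • 𝓕 g v = 0
    rw [hv, smul_zero]
  have hx0 : ((h x : ℝ) : ℂ) = 0 := by
    show g x = 0
    rw [← hinv, hz]
  exact_mod_cast hx0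


lemma sneg_apply (f : 𝓢(E3, ℝ)) (x : E3) : (-f) x = -(f x) := rfl

lemma PD_neg (j : Fin 3) (f : 𝓢(E3, ℝ)) : PD j (-f) = -(PD j f) := by simp [PD]

lemma PD_comm3 (i k : Fin 3) (f : 𝓢(E3, ℝ)) :
    PD k (PD k (PD i f)) = PD i (PD k (PD k f)) := by
  rw [PD_comm i k f, PD_comm i k (PD k f)]

lemma LAP_sub (a b : 𝓢(E3, ℝ)) : LAP (a - b) = LAP a - LAP b := by
  simp only [LAP, PD_sub]; abel

lemma LAP_smul (c : ℝ) (a : 𝓢(E3, ℝ)) : LAP (c • a) = c • LAP a := by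
  simp only [LAP, PD_smul, smul_add]

lemma LAP_add (a b : 𝓢(E3, ℝ)) : LAP (a + b) = LAP a + LAP b := by
  simp only [LAP, PD_add]; abel

lemma LAP_PD (i : Fin 3) (f : 𝓢(E3, ℝ)) : LAP (PD i f) = PD i (LAP f) := by
  simp only [LAP, PD_comm3, PD_add]

end Stmt12Aux

open Stmt12Aux

/-- Null structure of the divergence-free part of the current.
Write `φ = u + iv`, so the current is `f_i = Im(φ̄∂ᵢφ) = u∂ᵢv − v∂ᵢu`.  Let
`p = Δ⁻¹ div f` (so `f − ∇p = Pf` is the Leray projection of `f`) and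
`q_{ij} = (−Δ)⁻¹Q_{ij}(u,v) = |D|⁻²Q_{ij}(u,v)`, all Schwartz.  Then
`P(Im(φ̄∇φ))_i = 2R^j|D|⁻¹Q_{ij}(u,v)`, i.e. `f_i − ∂ᵢp = 2∑_j ∂ⱼ q_{ij}`. -/
theorem stmt_12 (u v : SchwartzMap (EuclideanSpace ℝ (Fin 3)) ℝ)
    (p : SchwartzMap (EuclideanSpace ℝ (Fin 3)) ℝ)
    (q : Fin 3 → Fin 3 → SchwartzMap (EuclideanSpace ℝ (Fin 3)) ℝ)
    (hp : ∀ x, lap (⇑p) x =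
      ∑ j : Fin 3, pd (fun y => u y * pd (⇑v) j y - v y * pd (⇑u) j y) j x)
    (hq : ∀ i j x, -(lap (⇑(q i j)) x) = Qform i j (⇑u) (⇑v) x) :
    ∀ (i : Fin 3) x,
      (u x * pd (⇑v) i x - v x * pd (⇑u) i x) - pd (⇑p) i x =
        2 * ∑ j : Fin 3, pd (⇑(q i j)) j x := by
  intro i x
  set J : Fin 3 → SchwartzMap (EuclideanSpace ℝ (Fin 3)) ℝ :=
    fun j => MUL u (PD j v) - MUL v (PD j u) with hJ
  have hJcoe : ∀ j, (fun y => u y * pd (⇑v) j y - v y * pd (⇑u) j y) = ⇑(J j) := by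
    intro j; funext y
    simp [hJ, MUL_coe, PD_coe]
  set QS : Fin 3 → SchwartzMap (EuclideanSpace ℝ (Fin 3)) ℝ :=
    fun j => MUL (PD i u) (PD j v) - MUL (PD j u) (PD i v) with hQS
  have hpS : LAP p = PD 0 (J 0) + PD 1 (J 1) + PD 2 (J 2) := by
    ext y
    rw [LAP_apply, hp y]
    simp only [Fin.sum_univ_three, hJcoe]
    simp [PD_coe]
  have hqS : ∀ j, LAP (q i j) = -(QS j) := by
    intro j
    ext y
    rw [LAP_apply]
    have := hq i j y
    have h2 : lap (⇑(q i j)) y = -(Qform i j (⇑u) (⇑v) y) := by linarith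
    rw [h2]
    simp [hQS, Qform, MUL_coe, PD_coe]
  set F : SchwartzMap (EuclideanSpace ℝ (Fin 3)) ℝ :=
    J i - PD i p - (2:ℝ) • (PD 0 (q i 0) + PD 1 (q i 1) + PD 2 (q i 2)) with hF
  have hLF : LAP F = 0 := by
    rw [hF, LAP_sub, LAP_sub, LAP_smul, LAP_add, LAP_add,
      LAP_PD, LAP_PD, LAP_PD, LAP_PD, hpS, hqS 0, hqS 1, hqS 2]
    have hc0 : ∀ f, PD i (PD 0 f) = PD 0 (PD i f) := fun f => PD_comm 0 i f
    have hc1 : ∀ f, PD i (PD 1 f) = PD 1 (PD i f) := fun f => PD_comm 1 i f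
    have hc2 : ∀ f, PD i (PD 2 f) = PD 2 (PD i f) := fun f => PD_comm 2 i f
    simp only [LAP, hJ, hQS, PD_neg, PD_sub, PD_add, PD_MUL]
    simp only [hc0, hc1, hc2]
    ext y
    simp only [SchwartzMap.sub_apply, SchwartzMap.add_apply, SchwartzMap.smul_apply, sneg_apply, MUL_coe, SchwartzMap.zero_apply, smul_eq_mul]
    ring
  have hF0 : ∀ y, F y = 0 := by
    apply liouville
    intro y
    rw [← LAP_apply, hLF]
    simp
  have := hF0 x
  simp only [hF, SchwartzMap.sub_apply, SchwartzMap.smul_apply, SchwartzMap.add_apply,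
    hJ, MUL_coe, smul_eq_mul] at this
  rw [Fin.sum_univ_three]
  have hJix : (J i) x = u x * pd (⇑v) i x - v x * pd (⇑u) i x := by
    simp [hJ, MUL_coe, PD_coe]
  rw [hJ] at hJix
  simp only [PD_coe] at this ⊢
  linarith [this]


end
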